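/- (BV compactness in L¹.) Let α < β be real numbers and let (f_n) be a sequence of measurable functions f_n : [α,β] → ℝ with f_n ∈ L¹((α,β)) and total variation V_α^β(f_n) < ∞ such that sup_n (‖f_n‖_{L¹((α,β))} + V_α^β(f_n)) < ∞. Then there exist a function f : [α,β] → ℝ of bounded variation with f ∈ L¹((α,β)) and a subsequence (f_{n_a}) such that f_{n_a} → f pointwise on [α,β] and f_{n_a} → f in L¹((α,β)). -/

import Mathlib

open MeasureTheory Filter
open Set Topology

lemma helly_countable {s : Set ℝ} (hs : s.Countable) (g : ℕ → ℝ → ℝ) {M : ℝ}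
    (hb : ∀ n, ∀ x ∈ s, |g n x| ≤ M) :
    ∃ φ : ℕ → ℕ, StrictMono φ ∧ ∀ x ∈ s, ∃ l, Tendsto (fun n => g (φ n) x) atTop (𝓝 l) := by
  haveI : Countable ↥s := hs.to_subtype
  set K : Set (↥s → ℝ) := Set.pi univ (fun _ => Icc (-M) M) with hK
  have hKc : IsCompact K := isCompact_univ_pi (fun _ => isCompact_Icc)
  have hmem : ∀ n, (fun d : ↥s => g n d.1) ∈ K := by
    intro n d _
    exact abs_le.1 (hb n _ d.2)
  obtain ⟨a, -, φ, hφ, hconv⟩ := hKc.tendsto_subseq hmem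
  exact ⟨φ, hφ, fun x hx => ⟨a ⟨x, hx⟩, (tendsto_pi_nhds.1 hconv) ⟨x, hx⟩⟩⟩

lemma helly_mono {α β M : ℝ} (hαβ : α ≤ β) (g : ℕ → ℝ → ℝ)
    (hmono : ∀ n, MonotoneOn (g n) (Icc α β))
    (hb : ∀ n, ∀ x ∈ Icc α β, |g n x| ≤ M) :
    ∃ φ : ℕ → ℕ, StrictMono φ ∧
      ∀ x ∈ Icc α β, ∃ l, Tendsto (fun n => g (φ n) x) atTop (𝓝 l) := by
  classical
  set D : Set ℝ := (Icc α β ∩ Set.range ((↑) : ℚ → ℝ)) ∪ {α, β} with hDdef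
  have hDc : D.Countable :=
    ((Set.countable_range _).mono inter_subset_right).union
      ((Set.countable_singleton β).insert α)
  have hDsub : D ⊆ Icc α β := by
    rintro x (⟨hx, -⟩ | hx)
    · exact hx
    · rcases hx with rfl | rfl
      · exact ⟨le_refl _, hαβ⟩
      · exact ⟨hαβ, le_refl _⟩
  have hαD : α ∈ D := Or.inr (Or.inl rfl)
  have hβD : β ∈ D := Or.inr (Or.inr rfl)
  obtain ⟨φ₁, hφ₁, hconv₁⟩ := helly_countable hDc g (fun n x hx => hb n x (hDsub hx))
  choose! L hL using hconv₁
  have hLb : ∀ d ∈ D, |L d| ≤ M := fun d hd =>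
    le_of_tendsto (hL d hd).abs (Eventually.of_forall fun n => hb _ d (hDsub hd))
  have hLmono : ∀ d ∈ D, ∀ e ∈ D, d ≤ e → L d ≤ L e := fun d hd e he hde =>
    le_of_tendsto_of_tendsto' (hL d hd) (hL e he)
      (fun n => hmono _ (hDsub hd) (hDsub he) hde)
  set G : ℝ → ℝ := fun x => if x ≤ β then sInf (L '' (D ∩ Ici x)) else L β with hGdef
  have hne : ∀ x ≤ β, (L '' (D ∩ Ici x)).Nonempty := fun x hx => ⟨L β, β, ⟨hβD, hx⟩, rfl⟩
  have hbdd : ∀ x : ℝ, BddBelow (L '' (D ∩ Ici x)) := by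
    intro x
    refine ⟨-M, ?_⟩
    rintro y ⟨d, ⟨hd, -⟩, rfl⟩
    exact neg_le_of_abs_le (hLb d hd)
  have hGmono : Monotone G := by
    intro x y hxy
    by_cases hy : y ≤ β
    · have hx : x ≤ β := hxy.trans hy
      simp only [hGdef, if_pos hx, if_pos hy]
      exact csInf_le_csInf (hbdd x) (hne y hy)
        (Set.image_mono (inter_subset_inter_right _ (Ici_subset_Ici.2 hxy)))
    · by_cases hx : x ≤ β
      · simp only [hGdef, if_pos hx, if_neg hy]
        exact csInf_le (hbdd x) ⟨β, ⟨hβD, hx⟩, rfl⟩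
      · simp only [hGdef, if_neg hx, if_neg hy, le_refl]
  have hGeqL : ∀ d ∈ D, G d = L d := by
    intro d hd
    have hdβ : d ≤ β := (hDsub hd).2
    simp only [hGdef, if_pos hdβ]
    refine le_antisymm (csInf_le (hbdd d) ⟨d, ⟨hd, Set.mem_Ici.2 le_rfl⟩, rfl⟩) ?_
    refine le_csInf (hne d hdβ) ?_
    rintro y ⟨e, ⟨heD, hde⟩, rfl⟩
    exact hLmono d hd e heD hde
  have key : ∀ x ∈ Icc α β, ContinuousAt G x →
      Tendsto (fun n => g (φ₁ n) x) atTop (𝓝 (G x)) := by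
    intro x hx hcont
    rw [Metric.tendsto_atTop]
    intro ε hε
    obtain ⟨δ, hδ, hδε⟩ := Metric.continuousAt_iff.1 hcont ε hε
    -- find d₂ ∈ D with x ≤ d₂ and G d₂ < G x + ε
    obtain ⟨d₂, hd₂D, hxd₂, hd₂⟩ : ∃ d₂ ∈ D, x ≤ d₂ ∧ G d₂ < G x + ε := by
      rcases eq_or_lt_of_le hx.2 with rfl | hxβ
      · exact ⟨x, hβD, le_refl _, by linarith⟩
      · obtain ⟨q, hq1, hq2⟩ := exists_rat_btwn (lt_min hxβ (lt_add_of_pos_right x hδ))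
        have hqβ : (q : ℝ) ≤ β := le_of_lt (lt_of_lt_of_le hq2 (min_le_left _ _))
        have hqD : (q : ℝ) ∈ D := Or.inl ⟨⟨hx.1.trans hq1.le, hqβ⟩, ⟨q, rfl⟩⟩
        have hdist : dist (q : ℝ) x < δ := by
          rw [Real.dist_eq, abs_of_pos (by linarith)]
          have := lt_of_lt_of_le hq2 (min_le_right _ _)
          linarith
        have := hδε hdist
        rw [Real.dist_eq, abs_lt] at this
        exact ⟨q, hqD, hq1.le, by linarith [this.2]⟩
    obtain ⟨d₁, hd₁D, hd₁x, hd₁⟩ : ∃ d₁ ∈ D, d₁ ≤ x ∧ G x - ε < G d₁ := by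
      rcases eq_or_lt_of_le hx.1 with heq | hαx
      · refine ⟨α, hαD, hx.1, ?_⟩
        rw [← heq]
        linarith
      · obtain ⟨q, hq1, hq2⟩ := exists_rat_btwn (max_lt hαx (sub_lt_self x hδ))
        have hqα : α ≤ (q : ℝ) := le_of_lt (lt_of_le_of_lt (le_max_left _ _) hq1)
        have hqD : (q : ℝ) ∈ D := Or.inl ⟨⟨hqα, hq2.le.trans hx.2⟩, ⟨q, rfl⟩⟩
        have hdist : dist (q : ℝ) x < δ := by
          rw [Real.dist_eq, abs_of_nonpos (by linarith)]
          have := lt_of_le_of_lt (le_max_right α _) hq1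
          linarith
        have := hδε hdist
        rw [Real.dist_eq, abs_lt] at this
        exact ⟨q, hqD, hq2.le, by linarith [this.1]⟩
    have hev₁ : ∀ᶠ n in atTop, G x - ε < g (φ₁ n) d₁ := by
      have : Tendsto (fun n => g (φ₁ n) d₁) atTop (𝓝 (G d₁)) := by
        rw [hGeqL d₁ hd₁D]; exact hL d₁ hd₁D
      exact this.eventually_const_lt hd₁
    have hev₂ : ∀ᶠ n in atTop, g (φ₁ n) d₂ < G x + ε := by
      have : Tendsto (fun n => g (φ₁ n) d₂) atTop (𝓝 (G d₂)) := by
        rw [hGeqL d₂ hd₂D]; exact hL d₂ hd₂D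
      exact this.eventually_lt_const hd₂
    obtain ⟨N, hN⟩ := (hev₁.and hev₂).exists_forall_of_atTop
    refine ⟨N, fun n hn => ?_⟩
    obtain ⟨h1, h2⟩ := hN n hn
    have hl : g (φ₁ n) d₁ ≤ g (φ₁ n) x := hmono _ (hDsub hd₁D) hx hd₁x
    have hr : g (φ₁ n) x ≤ g (φ₁ n) d₂ := hmono _ hx (hDsub hd₂D) hxd₂
    rw [Real.dist_eq, abs_lt]
    constructor <;> linarith
  set B : Set ℝ := {x | ¬ContinuousAt G x} ∩ Icc α β with hBdef
  have hBc : B.Countable := (hGmono.countable_not_continuousAt).mono inter_subset_left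
  obtain ⟨φ₂, hφ₂, hconv₂⟩ := helly_countable hBc (fun n => g (φ₁ n))
    (fun n x hx => hb _ x hx.2)
  refine ⟨φ₁ ∘ φ₂, hφ₁.comp hφ₂, fun x hx => ?_⟩
  by_cases hcont : ContinuousAt G x
  · exact ⟨G x, (key x hx hcont).comp hφ₂.tendsto_atTop⟩
  · exact hconv₂ x ⟨hcont, hx⟩


/-- **BV compactness in `L¹`.** A sequence of functions on `[α,β]` that is bounded in
`L¹` and has uniformly bounded total variation admits a subsequence converging pointwise
on `[α,β]` and in `L¹((α,β))` to a function of bounded variation. -/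
theorem bv_compactness_in_L1 (α β : ℝ) (hαβ : α < β) (fn : ℕ → ℝ → ℝ)
    (hInt : ∀ n, MeasureTheory.IntegrableOn (fn n) (Set.Ioo α β))
    (C : ℝ)
    (hC : ∀ n, (∫ x in Set.Ioo α β, |fn n x|)
        + (eVariationOn (fn n) (Set.Icc α β)).toReal ≤ C)
    (hBV : ∀ n, eVariationOn (fn n) (Set.Icc α β) ≠ ⊤) :
    ∃ (f : ℝ → ℝ) (φ : ℕ → ℕ), StrictMono φ ∧
      eVariationOn f (Set.Icc α β) ≠ ⊤ ∧
      MeasureTheory.IntegrableOn f (Set.Ioo α β) ∧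
      (∀ x ∈ Set.Icc α β, Tendsto (fun a => fn (φ a) x) atTop (nhds (f x))) ∧
      Tendsto (fun a => ∫ x in Set.Ioo α β, |fn (φ a) x - f x|) atTop (nhds 0) := by
  classical
  have hba : (0:ℝ) < β - α := sub_pos.2 hαβ
  have hIntNonneg : ∀ n, 0 ≤ ∫ x in Set.Ioo α β, |fn n x| := fun n =>
    integral_nonneg fun x => abs_nonneg _
  have hVarle : ∀ n, (eVariationOn (fn n) (Set.Icc α β)).toReal ≤ C := fun n => by
    have := hC n; linarith [hIntNonneg n]
  have hVarC : ∀ n, eVariationOn (fn n) (Set.Icc α β) ≤ ENNReal.ofReal C := fun n =>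
    (ENNReal.le_ofReal_iff_toReal_le (hBV n) ((ENNReal.toReal_nonneg).trans (hVarle n))).2
      (hVarle n)
  have hIntle : ∀ n, (∫ x in Set.Ioo α β, |fn n x|) ≤ C := fun n => by
    have := hC n; linarith [ENNReal.toReal_nonneg (a := eVariationOn (fn n) (Set.Icc α β))]
  have hC0 : 0 ≤ C := (hIntNonneg 0).trans (hIntle 0)
  -- uniform pointwise bound
  set M : ℝ := C / (β - α) + C with hMdef
  have hM : ∀ n, ∀ x ∈ Set.Icc α β, |fn n x| ≤ M := by
    intro n x hx
    have key : ∀ y ∈ Set.Ioo α β, |fn n x| - C ≤ |fn n y| := by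
      intro y hy
      have hd : dist (fn n x) (fn n y) ≤ (eVariationOn (fn n) (Set.Icc α β)).toReal :=
        BoundedVariationOn.dist_le (hBV n) hx (Ioo_subset_Icc_self hy)
      rw [Real.dist_eq] at hd
      have := abs_sub_abs_le_abs_sub (fn n x) (fn n y)
      linarith [hVarle n]
    have h1 : ∫ (_ : ℝ) in Set.Ioo α β, (|fn n x| - C) ≤ ∫ y in Set.Ioo α β, |fn n y| := by
      refine setIntegral_mono_on (integrableOn_const measure_Ioo_lt_top.ne enorm_ne_top)
        ((hInt n).abs) measurableSet_Ioo key
    rw [setIntegral_const, measureReal_def, Real.volume_Ioo, ENNReal.toReal_ofReal hba.le, smul_eq_mul] at h1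
    have h2 : (β - α) * (|fn n x| - C) ≤ C := h1.trans (hIntle n)
    have h3 : |fn n x| - C ≤ C / (β - α) := (le_div_iff₀ hba).2 (by linarith [h2, mul_comm (β - α) (|fn n x| - C)])
    rw [hMdef]
    linarith
  -- Jordan decomposition
  have hloc : ∀ n, LocallyBoundedVariationOn (fn n) (Set.Icc α β) := fun n =>
    BoundedVariationOn.locallyBoundedVariationOn (hBV n)
  have hαI : α ∈ Set.Icc α β := ⟨le_refl _, hαβ.le⟩
  set p : ℕ → ℝ → ℝ := fun n => variationOnFromTo (fn n) (Set.Icc α β) α with hpdef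
  set q : ℕ → ℝ → ℝ := fun n x => p n x - fn n x with hqdef
  have hpmono : ∀ n, MonotoneOn (p n) (Set.Icc α β) := fun n =>
    variationOnFromTo.monotoneOn (hloc n) hαI
  have hqmono : ∀ n, MonotoneOn (q n) (Set.Icc α β) := fun n =>
    variationOnFromTo.sub_self_monotoneOn (hloc n) hαI
  have hpb : ∀ n, ∀ x ∈ Set.Icc α β, |p n x| ≤ C := by
    intro n x hx
    have h0 : 0 ≤ p n x := variationOnFromTo.nonneg_of_le _ _ hx.1
    rw [abs_of_nonneg h0]
    show variationOnFromTo (fn n) (Set.Icc α β) α x ≤ C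
    rw [variationOnFromTo.eq_of_le _ _ hx.1]
    refine (ENNReal.toReal_mono (hBV n) (eVariationOn.mono _ inter_subset_left)).trans
      (hVarle n)
  have hqb : ∀ n, ∀ x ∈ Set.Icc α β, |q n x| ≤ C + M := by
    intro n x hx
    calc |q n x| ≤ |p n x| + |fn n x| := abs_sub _ _
      _ ≤ C + M := add_le_add (hpb n x hx) (hM n x hx)
  obtain ⟨φa, hφa, hconva⟩ := helly_mono hαβ.le p hpmono hpb
  obtain ⟨φb, hφb, hconvb⟩ := helly_mono hαβ.le (fun a => q (φa a))
    (fun a => hqmono (φa a)) (fun a => hqb (φa a))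
  set φ : ℕ → ℕ := φa ∘ φb with hφdef
  have hφm : StrictMono φ := hφa.comp hφb
  have hlim : ∀ x ∈ Set.Icc α β, ∃ l, Tendsto (fun a => fn (φ a) x) atTop (𝓝 l) := by
    intro x hx
    obtain ⟨lp, hlp⟩ := hconva x hx
    obtain ⟨lq, hlq⟩ := hconvb x hx
    refine ⟨lp - lq, ?_⟩
    have hlp' : Tendsto (fun a => p (φ a) x) atTop (𝓝 lp) := hlp.comp hφb.tendsto_atTop
    have : (fun a => fn (φ a) x) = fun a => p (φ a) x - q (φ a) x := by
      funext a; simp [hqdef]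
    rw [this]
    exact hlp'.sub hlq
  choose! f hf using hlim
  refine ⟨f, φ, hφm, ?_, ?_, hf, ?_⟩
  · -- bounded variation of the limit
    intro htop
    have hv : ENNReal.ofReal C < eVariationOn f (Set.Icc α β) := by
      rw [htop]; exact ENNReal.ofReal_lt_top
    have := eVariationOn.lowerSemicontinuous_aux (F := fun a => fn (φ a)) (p := atTop)
      (f := f) (s := Set.Icc α β) hf hv
    obtain ⟨a, ha⟩ := this.exists
    exact absurd (hVarC (φ a)) (not_le.2 ha)
  · -- integrability of the limit
    have hfm : AEStronglyMeasurable f (volume.restrict (Set.Ioo α β)) := by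
      refine aestronglyMeasurable_of_tendsto_ae atTop
        (fun a => (hInt (φ a)).aestronglyMeasurable) ?_
      refine (ae_restrict_iff' measurableSet_Ioo).2 (ae_of_all _ fun x hx => ?_)
      exact hf x (Ioo_subset_Icc_self hx)
    refine Integrable.mono' (g := fun _ => M)
      (integrableOn_const measure_Ioo_lt_top.ne enorm_ne_top) hfm ?_
    refine (ae_restrict_iff' measurableSet_Ioo).2 (ae_of_all _ fun x hx => ?_)
    have hx' := Ioo_subset_Icc_self hx
    have : Tendsto (fun a => |fn (φ a) x|) atTop (𝓝 |f x|) := (hf x hx').abs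
    exact le_of_tendsto this (Eventually.of_forall fun a => hM (φ a) x hx')
  · -- L¹ convergence
    have hfb : ∀ x ∈ Set.Icc α β, |f x| ≤ M := by
      intro x hx
      exact le_of_tendsto (hf x hx).abs (Eventually.of_forall fun a => hM (φ a) x hx)
    have hfm : AEStronglyMeasurable f (volume.restrict (Set.Ioo α β)) := by
      refine aestronglyMeasurable_of_tendsto_ae atTop
        (fun a => (hInt (φ a)).aestronglyMeasurable) ?_
      refine (ae_restrict_iff' measurableSet_Ioo).2 (ae_of_all _ fun x hx => ?_)
      exact hf x (Ioo_subset_Icc_self hx)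
    have := tendsto_integral_of_dominated_convergence (μ := volume.restrict (Set.Ioo α β))
      (F := fun a x => |fn (φ a) x - f x|) (f := fun _ => (0:ℝ)) (bound := fun _ => M + M)
      (fun a => ((hInt (φ a)).aestronglyMeasurable.sub hfm).norm)
      (integrableOn_const measure_Ioo_lt_top.ne enorm_ne_top)
      (fun a => (ae_restrict_iff' measurableSet_Ioo).2 (ae_of_all _ fun x hx => by
        have hx' := Ioo_subset_Icc_self hx
        have h1 := hM (φ a) x hx'
        have h2 := hfb x hx'
        rw [Real.norm_eq_abs, abs_abs]
        calc |fn (φ a) x - f x| ≤ |fn (φ a) x| + |f x| := abs_sub _ _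
          _ ≤ M + M := add_le_add h1 h2))
      ((ae_restrict_iff' measurableSet_Ioo).2 (ae_of_all _ fun x hx => by
        have hx' := Ioo_subset_Icc_self hx
        have : Tendsto (fun a => fn (φ a) x - f x) atTop (𝓝 (f x - f x)) :=
          (hf x hx').sub tendsto_const_nhds
        rw [sub_self] at this
        simpa using this.abs))
    simpa using this
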